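/- With the Poisson structure on Hom(V_1,V_2) ⊕ Hom(V_2,V_1) as above, the functions α_t(f, g) = Tr(Λ^t (f ∘ g)) (trace of the t-th exterior power, i.e., the t-th elementary symmetric function of the eigenvalues of f∘g) are pairwise Poisson commutative. -/

import Mathlib

open Matrix Polynomial Finset

section DerHelpers

variable {R : Type*} [CommRing R] (d : R → R)
variable (hadd : ∀ a b, d (a + b) = d a + d b)
variable (hmul : ∀ a b, d (a * b) = d a * b + a * d b)

include hadd in
lemma myder_zero : d 0 = 0 := by
  have h := hadd 0 0
  rw [add_zero] at h
  exact left_eq_add.mp h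

include hmul in
lemma myder_one : d 1 = 0 := by
  have h := hmul 1 1
  rw [mul_one, one_mul, mul_one] at h
  exact left_eq_add.mp h

include hadd in
lemma myder_neg (a : R) : d (-a) = - d a := by
  have h := hadd a (-a)
  rw [add_neg_cancel, myder_zero d hadd] at h
  exact (neg_eq_of_add_eq_zero_right h.symm).symm

include hadd in
lemma myder_sum {ι : Type*} (s : Finset ι) (f : ι → R) :
    d (∑ i ∈ s, f i) = ∑ i ∈ s, d (f i) :=
  map_sum (AddMonoidHom.mk' d hadd) f s

include hadd in
lemma myder_zsmul (z : ℤ) (a : R) : d (z • a) = z • d a :=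
  map_zsmul (AddMonoidHom.mk' d hadd) z a

set_option linter.unusedSectionVars false in
include hadd hmul in
lemma myder_prod {ι : Type*} [DecidableEq ι] (s : Finset ι) (f : ι → R) :
    d (∏ i ∈ s, f i) = ∑ i ∈ s, d (f i) * ∏ j ∈ s.erase i, f j := by
  induction s using Finset.induction with
  | empty => simp [myder_one d hmul]
  | insert a s ha ih =>
    rw [Finset.prod_insert ha, hmul, ih, Finset.sum_insert ha, Finset.erase_insert ha]
    congr 1
    rw [Finset.mul_sum]
    refine Finset.sum_congr rfl fun i hi => ?_
    rw [Finset.erase_insert_of_ne (Ne.symm (fun h : i = a => ha (h ▸ hi))),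
      Finset.prod_insert (fun h => ha (Finset.mem_of_mem_erase h))]
    ring

include hadd hmul in
lemma myder_det {n : Type*} [Fintype n] [DecidableEq n] (M : Matrix n n R) :
    d M.det = ∑ i, (M.updateCol i fun r => d (M r i)).det := by
  rw [Matrix.det_apply]
  rw [myder_sum d hadd]
  have h1 : ∀ σ : Equiv.Perm n,
      d (Equiv.Perm.sign σ • ∏ i, M (σ i) i)
        = ∑ i, Equiv.Perm.sign σ • (d (M (σ i) i) * ∏ j ∈ Finset.univ.erase i, M (σ j) j) := by
    intro σ
    rw [show ((Equiv.Perm.sign σ : ℤˣ) • ∏ i, M (σ i) i)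
          = ((Equiv.Perm.sign σ : ℤ) • ∏ i, M (σ i) i) by simp [Units.smul_def],
      myder_zsmul d hadd, myder_prod d hadd hmul, Finset.smul_sum]
    refine Finset.sum_congr rfl fun i _ => ?_
    simp [Units.smul_def]
  simp_rw [h1]
  rw [Finset.sum_comm]
  refine Finset.sum_congr rfl fun i _ => ?_
  rw [Matrix.det_apply]
  refine Finset.sum_congr rfl fun σ _ => ?_
  congr 1
  rw [← Finset.mul_prod_erase Finset.univ _ (Finset.mem_univ i)]
  rw [Matrix.updateCol_self]
  congr 1
  refine Finset.prod_congr rfl fun j hj => ?_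
  rw [Matrix.updateCol_apply, if_neg (Finset.ne_of_mem_erase hj)]

end DerHelpers

section DerX

variable {A : Type*} [CommRing A] (d : A → A)
variable (hadd : ∀ a b, d (a + b) = d a + d b)
variable (hmul : ∀ a b, d (a * b) = d a * b + a * d b)

/-- coefficientwise extension of `d` to polynomials -/
noncomputable def derX (d : A → A) (p : Polynomial A) : Polynomial A :=
  p.sum fun n a => Polynomial.monomial n (d a)

include hadd in
lemma derX_coeff (p : Polynomial A) (m : ℕ) : (derX d p).coeff m = d (p.coeff m) := by
  have h0 : d 0 = 0 := myder_zero d hadd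
  rw [derX, Polynomial.coeff_sum]
  unfold Polynomial.sum
  simp_rw [Polynomial.coeff_monomial]
  rw [Finset.sum_ite_eq' p.support m (fun n => d (p.coeff n))]
  by_cases hm : m ∈ p.support
  · rw [if_pos hm]
  · rw [if_neg hm, Polynomial.notMem_support_iff.mp hm, h0]

include hadd in
lemma derX_add (p q : Polynomial A) : derX d (p + q) = derX d p + derX d q := by
  ext m
  simp only [Polynomial.coeff_add, derX_coeff d hadd, hadd]

include hadd hmul in
lemma derX_mul (p q : Polynomial A) : derX d (p * q) = derX d p * q + p * derX d q := by
  ext m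
  rw [derX_coeff d hadd, Polynomial.coeff_add, Polynomial.coeff_mul, Polynomial.coeff_mul,
    Polynomial.coeff_mul]
  have hs : d (∑ x ∈ Finset.HasAntidiagonal.antidiagonal m, p.coeff x.1 * q.coeff x.2)
      = ∑ x ∈ Finset.HasAntidiagonal.antidiagonal m, d (p.coeff x.1 * q.coeff x.2) :=
    map_sum (AddMonoidHom.mk' d hadd) _ _
  rw [hs, ← Finset.sum_add_distrib]
  refine Finset.sum_congr rfl fun x _ => ?_
  rw [hmul, derX_coeff d hadd, derX_coeff d hadd]

include hadd in
lemma derX_C (a : A) : derX d (Polynomial.C a) = Polynomial.C (d a) := by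
  ext m
  rw [derX_coeff d hadd, Polynomial.coeff_C, Polynomial.coeff_C]
  split_ifs <;> simp [myder_zero d hadd]

include hadd hmul in
lemma derX_X : derX d (Polynomial.X : Polynomial A) = 0 := by
  ext m
  rw [derX_coeff d hadd, Polynomial.coeff_X]
  split_ifs <;> simp [myder_zero d hadd, myder_one d hmul]

include hadd in
lemma derX_neg (p : Polynomial A) : derX d (-p) = - derX d p := by
  ext m
  simp [derX_coeff d hadd, myder_neg d hadd]

include hadd in
lemma derX_sub (p q : Polynomial A) : derX d (p - q) = derX d p - derX d q := by
  rw [sub_eq_add_neg, derX_add d hadd, derX_neg d hadd, sub_eq_add_neg]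

end DerX

/-- With the canonical Poisson structure on `Hom(V₁,V₂) ⊕ Hom(V₂,V₁)`, the power traces
`α_t = Tr(Λ^t (f ∘ g))` (elementary symmetric functions of the eigenvalues) are pairwise Poisson commutative. -/
theorem stmt11 (A : Type*) [CommRing A]
    (ι₁ ι₂ : Type*) [Fintype ι₁] [DecidableEq ι₁] [Fintype ι₂] [DecidableEq ι₂]
    (B : A → A → A)
    (haddl : ∀ a b c, B (a + b) c = B a c + B b c)
    (hskew : ∀ a b, B a b = - B b a)
    (hleib : ∀ a b c, B a (b * c) = B a b * c + b * B a c)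
    (F : ι₂ → ι₁ → A) (G : ι₁ → ι₂ → A)
    (hFF : ∀ i k : ι₂, ∀ j l : ι₁, B (F i j) (F k l) = 0)
    (hGG : ∀ i k : ι₁, ∀ j l : ι₂, B (G i j) (G k l) = 0)
    (hGF : ∀ (c : ι₁) (d : ι₂) (a : ι₂) (b : ι₁),
      B (G c d) (F a b) = if d = a ∧ c = b then 1 else 0)
    (H : Matrix ι₂ ι₂ A) (hH : ∀ i j, H i j = ∑ b, F i b * G b j) :
    ∀ t t' : ℕ,
      B ((-1 : A) ^ t * H.charpoly.coeff (Fintype.card ι₂ - t))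
        ((-1 : A) ^ t' * H.charpoly.coeff (Fintype.card ι₂ - t')) = 0 := by
  -- derived bracket facts
  have haddr : ∀ a b c, B a (b + c) = B a b + B a c := by
    intro a b c
    rw [hskew, haddl, hskew b a, hskew c a]
    ring
  have hleibl : ∀ a b c, B (a * b) c = B a c * b + a * B b c := by
    intro a b c
    rw [hskew, hleib, hskew c a, hskew c b]
    ring
  have hsuml : ∀ (s : Finset ι₁) (f : ι₁ → A) (y : A),
      B (∑ i ∈ s, f i) y = ∑ i ∈ s, B (f i) y :=
    fun s f y => map_sum (AddMonoidHom.mk' (fun x => B x y) (fun a b => haddl a b y)) f s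
  have hsumr : ∀ (s : Finset ι₁) (f : ι₁ → A) (y : A),
      B y (∑ i ∈ s, f i) = ∑ i ∈ s, B y (f i) :=
    fun s f y => map_sum (AddMonoidHom.mk' (fun x => B y x) (fun a b => haddr y a b)) f s
  -- the fundamental bracket between entries of H
  have hHH : ∀ i j k l, B (H i j) (H k l)
      = (if j = k then H i l else 0) - (if l = i then H k j else 0) := by
    intro i j k l
    have hterm : ∀ (b : ι₁) (c : ι₁), B (F i b * G b j) (F k c * G c l)
        = (if j = k ∧ b = c then F i b * G c l else 0)
          - (if l = i ∧ c = b then F k c * G b j else 0) := by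
      intro b c
      rw [hleibl, hleib, hleib, hFF, hGG, hGF b j k c,
        hskew (F i b) (G c l), hGF c l i b]
      split_ifs <;> ring
    rw [hH i j, hH k l, hsuml]
    have h2 : ∀ b : ι₁, B (F i b * G b j) (∑ c, F k c * G c l)
        = (if j = k then F i b * G b l else 0) - (if l = i then F k b * G b j else 0) := by
      intro b
      rw [hsumr]
      simp_rw [hterm b]
      rw [Finset.sum_sub_distrib]
      congr 1
      · by_cases hjk : j = k
        · simp [hjk]
        · simp [hjk]
      · by_cases hli : l = i
        · simp [hli]
        · simp [hli]
    simp_rw [h2]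
    rw [Finset.sum_sub_distrib]
    congr 1
    · split_ifs <;> simp [hH i l]
    · split_ifs <;> simp [hH k j]
  -- Step 1 : Casimir property of the charpoly coefficients
  have casimir : ∀ (m : ℕ) (k l : ι₂), B (H.charpoly.coeff m) (H k l) = 0 := by
    intro m k l
    set d : A → A := fun x => B x (H k l) with hd
    have dadd : ∀ a b, d (a + b) = d a + d b := fun a b => haddl a b _
    have dmul : ∀ a b, d (a * b) = d a * b + a * d b := fun a b => hleibl a b _
    set N : Matrix ι₂ ι₂ (Polynomial A) := charmatrix H with hNdef
    set E : Matrix ι₂ ι₂ (Polynomial A) := Matrix.single l k 1 with hE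
    set CH : Matrix ι₂ ι₂ (Polynomial A) := H.map Polynomial.C with hCH
    have dPadd := derX_add d dadd
    have dPmul := derX_mul d dadd dmul
    -- the matrix of derivatives is a commutator
    have hcol : ∀ i r, derX d (N r i) = (E * CH - CH * E) r i := by
      intro i r
      have hL : derX d (N r i) = - Polynomial.C (d (H r i)) := by
        by_cases hri : r = i
        · subst hri
          rw [hNdef, Matrix.charmatrix_apply_eq, derX_sub d dadd, derX_X d dadd dmul,
            derX_C d dadd, zero_sub]
        · rw [hNdef, Matrix.charmatrix_apply_ne _ _ _ hri, derX_neg d dadd, derX_C d dadd]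
      rw [hL, hd]
      simp only []
      rw [hHH r i k l]
      have hA : (E * CH) r i = if l = r then Polynomial.C (H k i) else 0 := by
        by_cases hlr : l = r
        · simp [hE, hCH, Matrix.mul_apply, Matrix.single, hlr, ite_and,
            Finset.sum_ite_eq]
        · simp [hE, hCH, Matrix.mul_apply, Matrix.single, hlr, ite_and]
      have hB : (CH * E) r i = if k = i then Polynomial.C (H r l) else 0 := by
        by_cases hki : k = i
        · simp [hE, hCH, Matrix.mul_apply, Matrix.single, hki, ite_and,
            Finset.sum_ite_eq]
        · simp [hE, hCH, Matrix.mul_apply, Matrix.single, hki, ite_and]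
      rw [Matrix.sub_apply, hA, hB, map_sub, apply_ite Polynomial.C, apply_ite Polynomial.C,
        map_zero, neg_sub]
      congr 1
      rcases eq_or_ne k i with h | h
      · simp [h]
      · simp [h, Ne.symm h]
    -- adjugate of the charmatrix commutes with CH
    have hNCH : N = Matrix.scalar ι₂ (Polynomial.X) - CH := by
      rw [hNdef, hCH]; rfl
    have hcomm : adjugate N * CH = CH * adjugate N := by
      have h1 : adjugate N * N = N * adjugate N := by
        rw [Matrix.adjugate_mul, Matrix.mul_adjugate]
      have h2 : adjugate N * Matrix.scalar ι₂ (Polynomial.X)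
          = Matrix.scalar ι₂ (Polynomial.X) * adjugate N :=
        ((Matrix.scalar_commute (Polynomial.X) (fun r' => Commute.all _ r') (adjugate N))).symm
      have h3 : adjugate N * (Matrix.scalar ι₂ (Polynomial.X)) - adjugate N * CH
          = Matrix.scalar ι₂ (Polynomial.X) * adjugate N - CH * adjugate N := by
        calc adjugate N * (Matrix.scalar ι₂ (Polynomial.X)) - adjugate N * CH
            = adjugate N * N := by rw [← Matrix.mul_sub, ← hNCH]
          _ = N * adjugate N := h1
          _ = Matrix.scalar ι₂ (Polynomial.X) * adjugate N - CH * adjugate N := by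
              rw [hNCH, Matrix.sub_mul]
      rw [h2] at h3
      exact sub_right_inj.mp h3
    -- compute the derivative of the determinant
    have key : derX d N.det = 0 := by
      rw [myder_det (derX d) dPadd dPmul N]
      have hdiag : ∀ i, (N.updateCol i fun r => derX d (N r i)).det
          = (adjugate N * (E * CH - CH * E)) i i := by
        intro i
        have hupd : (fun r => derX d (N r i)) = fun r => (E * CH - CH * E) r i :=
          funext (hcol i)
        rw [hupd, ← Matrix.cramer_apply, Matrix.cramer_eq_adjugate_mulVec]
        rw [Matrix.mulVec, Matrix.mul_apply]
        rfl
      simp_rw [hdiag]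
      have htr : ∀ M : Matrix ι₂ ι₂ (Polynomial A), ∑ i, M i i = Matrix.trace M := by
        intro M; rfl
      rw [htr, Matrix.mul_sub, Matrix.trace_sub]
      have hcyc : Matrix.trace (adjugate N * (E * CH)) = Matrix.trace (adjugate N * (CH * E)) := by
        calc Matrix.trace (adjugate N * (E * CH))
            = Matrix.trace ((adjugate N * E) * CH) := by rw [Matrix.mul_assoc]
          _ = Matrix.trace (CH * (adjugate N * E)) := Matrix.trace_mul_comm _ _
          _ = Matrix.trace ((CH * adjugate N) * E) := by rw [Matrix.mul_assoc]
          _ = Matrix.trace ((adjugate N * CH) * E) := by rw [hcomm]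
          _ = Matrix.trace (adjugate N * (CH * E)) := by rw [Matrix.mul_assoc]
      rw [hcyc, sub_self]
    have hcp : H.charpoly = N.det := rfl
    calc B (H.charpoly.coeff m) (H k l)
        = d (N.det.coeff m) := by rw [hcp]
      _ = (derX d N.det).coeff m := (derX_coeff d dadd _ m).symm
      _ = 0 := by rw [key, Polynomial.coeff_zero]
  -- Step 2 : coefficients pairwise commute
  have casimir2 : ∀ (m m' : ℕ), B (H.charpoly.coeff m) (H.charpoly.coeff m') = 0 := by
    intro m m'
    set c : A := H.charpoly.coeff m with hc
    set d : A → A := fun x => B c x with hd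
    have dadd : ∀ a b, d (a + b) = d a + d b := fun a b => haddr c a b
    have dmul : ∀ a b, d (a * b) = d a * b + a * d b := fun a b => hleib c a b
    have dH : ∀ r i, d (H r i) = 0 := fun r i => casimir m r i
    set N : Matrix ι₂ ι₂ (Polynomial A) := charmatrix H with hNdef
    have hcol : ∀ i r, derX d (N r i) = 0 := by
      intro i r
      have hL : derX d (N r i) = - Polynomial.C (d (H r i)) := by
        by_cases hri : r = i
        · subst hri
          rw [hNdef, Matrix.charmatrix_apply_eq, derX_sub d dadd, derX_X d dadd dmul,
            derX_C d dadd, zero_sub]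
        · rw [hNdef, Matrix.charmatrix_apply_ne _ _ _ hri, derX_neg d dadd, derX_C d dadd]
      rw [hL, dH, map_zero, neg_zero]
    have key : derX d N.det = 0 := by
      rw [myder_det (derX d) (derX_add d dadd) (derX_mul d dadd dmul) N]
      refine Finset.sum_eq_zero fun i _ => ?_
      refine Matrix.det_eq_zero_of_column_eq_zero i fun r => ?_
      rw [Matrix.updateCol_self]
      exact hcol i r
    have hcp : H.charpoly = N.det := rfl
    calc B c (H.charpoly.coeff m')
        = d (N.det.coeff m') := by rw [hcp]
      _ = (derX d N.det).coeff m' := (derX_coeff d dadd _ m').symm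
      _ = 0 := by rw [key, Polynomial.coeff_zero]
  -- brackets with powers of -1 vanish
  have hone : ∀ x : A, B 1 x = 0 := by
    intro x
    have h := hleibl 1 1 x
    rw [mul_one, mul_one, one_mul] at h
    exact left_eq_add.mp h
  have hnegone : ∀ x : A, B (-1 : A) x = 0 := by
    intro x
    have h := haddl 1 (-1) x
    rw [add_neg_cancel] at h
    have h0 : B (0 : A) x = 0 := by
      have h' := haddl 0 0 x
      rw [add_zero] at h'
      exact left_eq_add.mp h'
    rw [h0, hone, zero_add] at h
    exact h.symm
  have hpow : ∀ (s : ℕ) (x : A), B ((-1 : A) ^ s) x = 0 := by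
    intro s x
    induction s with
    | zero => simpa using hone x
    | succ s ih =>
      rw [pow_succ, hleibl, ih, hnegone, zero_mul, mul_zero, add_zero]
  -- final assembly
  intro t t'
  rw [hleibl, hpow, hleib, casimir2]
  have hv : B (H.charpoly.coeff (Fintype.card ι₂ - t)) ((-1 : A) ^ t') = 0 := by
    rw [hskew, hpow, neg_zero]
  rw [hv]
  ring
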